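/- For fixed data with at least one uncensored observation, the negative log-likelihood of the Normal AFT model in the parameterization (α, τ) ↦ (n₀/2)·log(2π/τ²) + (1/2)·Σ_{uncensored}(τ yᵢ - xᵢᵀα)² - Σ_{censored} log Φ(xᵢᵀα - τ yᵢ) is a convex function of (α, τ) on ℝ^p × (0,∞). -/

import Mathlib

open Matrix

noncomputable def phi (t : ℝ) : ℝ := (Real.sqrt (2 * Real.pi))⁻¹ * Real.exp (-t ^ 2 / 2)

noncomputable def Phi (t : ℝ) : ℝ := ∫ u in Set.Iic t, phi u

open Real MeasureTheory Set Filter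

lemma phi_pos (t : ℝ) : 0 < phi t := by
  unfold phi
  positivity

lemma continuous_phi : Continuous phi := by
  unfold phi
  continuity

lemma phi_eq : phi = fun x : ℝ => (Real.sqrt (2 * Real.pi))⁻¹ * Real.exp (-(1/2) * x ^ 2) := by
  funext x; unfold phi; ring_nf

lemma integrable_phi : Integrable phi := by
  rw [phi_eq]
  exact (integrable_exp_neg_mul_sq (by norm_num : (0:ℝ) < 1/2)).const_mul _

lemma integrable_mul_phi : Integrable (fun t : ℝ => t * phi t) := by
  have h := (integrable_mul_exp_neg_mul_sq (by norm_num : (0:ℝ) < 1/2)).const_mul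
      ((Real.sqrt (2 * Real.pi))⁻¹)
  refine h.congr (Filter.EventuallyEq.of_eq ?_)
  funext u; unfold phi; ring_nf

lemma hasDerivAt_phi (t : ℝ) : HasDerivAt phi (-t * phi t) t := by
  have h1 : HasDerivAt (fun u : ℝ => -u ^ 2 / 2) (-t) t := by
    have := ((hasDerivAt_pow 2 t).neg).div_const 2
    convert this using 1
    · rfl
    · rfl
    · rfl
    · simp; ring
  have h2 := (h1.exp).const_mul ((Real.sqrt (2 * Real.pi))⁻¹)
  convert h2 using 1
  · rfl
  · rfl
  · rfl
  · unfold phi; ring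

lemma Phi_sub (a b : ℝ) : Phi b - Phi a = ∫ u in a..b, phi u :=
  intervalIntegral.integral_Iic_sub_Iic integrable_phi.integrableOn integrable_phi.integrableOn

lemma hasDerivAt_Phi (t : ℝ) : HasDerivAt Phi (phi t) t := by
  have heq : Phi = fun s => Phi 0 + ∫ u in (0:ℝ)..s, phi u := by
    funext s
    rw [← Phi_sub]; ring
  rw [heq]
  exact (intervalIntegral.integral_hasDerivAt_right
    (integrable_phi.intervalIntegrable)
    (continuous_phi.stronglyMeasurable.stronglyMeasurableAtFilter)
    continuous_phi.continuousAt).const_add _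

lemma Phi_pos (t : ℝ) : 0 < Phi t := by
  have h1 : (0:ℝ) < ∫ u in (t-1)..t, phi u :=
    intervalIntegral.intervalIntegral_pos_of_pos
      (integrable_phi.intervalIntegrable) (fun u => phi_pos u) (by linarith)
  have h2 : (∫ u in (t-1)..t, phi u) ≤ Phi t := by
    rw [intervalIntegral.integral_of_le (by linarith : t - 1 ≤ t)]
    exact setIntegral_mono_set integrable_phi.integrableOn
      (Filter.Eventually.of_forall fun u => (phi_pos u).le)
      (Filter.Eventually.of_forall (fun u hu => Set.Ioc_subset_Iic_self hu))
  linarith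

lemma tendsto_phi_atBot : Tendsto phi atBot (nhds 0) := by
  rw [phi_eq]
  rw [show (0:ℝ) = (Real.sqrt (2 * Real.pi))⁻¹ * 0 by ring]
  refine Filter.Tendsto.const_mul _ ?_
  refine Real.tendsto_exp_atBot.comp ?_
  have h1 : Tendsto (fun u : ℝ => u ^ 2) atBot atTop := by
    have := (tendsto_neg_atBot_atTop.atTop_mul_atTop₀ tendsto_neg_atBot_atTop
      : Tendsto (fun u : ℝ => (-u) * (-u)) atBot atTop)
    refine this.congr fun u => by ring
  have h2 : Tendsto (fun u : ℝ => -(1/2) * u ^ 2) atBot atBot := by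
    exact (h1.const_mul_atTop_of_neg (by norm_num : (-(1/2):ℝ) < 0))
  exact h2

lemma integral_Iic_mul_phi (t : ℝ) : ∫ u in Set.Iic t, u * phi u = -phi t := by
  have h := MeasureTheory.integral_Iic_of_hasDerivAt_of_tendsto
    (f := fun u => -phi u) (f' := fun u => u * phi u) (a := t) (m := 0)
    ((continuous_phi.neg).continuousWithinAt)
    (fun u _ => by have := (hasDerivAt_phi u).neg; simp only [neg_mul, neg_neg] at this; exact this)
    integrable_mul_phi.integrableOn
    (by simpa using tendsto_phi_atBot.neg)
  simpa using h

lemma mills (t : ℝ) : 0 ≤ t * Phi t + phi t := by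
  rcases le_or_gt 0 t with h | h
  · have := Phi_pos t
    have := phi_pos t
    nlinarith
  · have hint : IntegrableOn (fun u : ℝ => (u / t) * phi u) (Set.Iic t) := by
      refine ((integrable_mul_phi.const_mul t⁻¹).congr
        (Filter.EventuallyEq.of_eq ?_)).integrableOn
      funext u; rw [div_eq_mul_inv]; ring
    have key : Phi t ≤ ∫ u in Set.Iic t, (u / t) * phi u := by
      refine setIntegral_mono_on integrable_phi.integrableOn hint measurableSet_Iic ?_
      intro u hu
      have hu' : u ≤ t := hu
      have h1 : 1 ≤ u / t := by
        rw [le_div_iff_of_neg h]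
        simpa using hu'
      nlinarith [phi_pos u]
    have heq : (∫ u in Set.Iic t, (u / t) * phi u) = -phi t / t := by
      have : (fun u : ℝ => (u / t) * phi u) = fun u => t⁻¹ * (u * phi u) := by
        funext u; rw [div_eq_mul_inv]; ring
      rw [this, MeasureTheory.integral_const_mul, integral_Iic_mul_phi]
      field_simp
    rw [heq] at key
    have hmul := mul_le_mul_of_nonpos_left key (le_of_lt h)
    have hcalc : t * (-phi t / t) = -phi t := by
      field_simp
      congr 1
      exact mul_div_cancel_left₀ _ h.ne
    rw [hcalc] at hmul
    linarith

lemma hasDerivAt_logPhi (t : ℝ) :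
    HasDerivAt (fun s => Real.log (Phi s)) (phi t / Phi t) t :=
  (hasDerivAt_Phi t).log (Phi_pos t).ne'

lemma convexOn_neg_log_Phi : ConvexOn ℝ Set.univ (fun t : ℝ => -Real.log (Phi t)) := by
  refine convexOn_of_hasDerivWithinAt2_nonneg (f' := fun t => -(phi t / Phi t))
    (f'' := fun t => -((-t * phi t * Phi t - phi t * phi t) / (Phi t) ^ 2))
    convex_univ ?_ ?_ ?_ ?_
  · exact (Continuous.continuousOn (by
      refine continuous_iff_continuousAt.mpr fun t => ?_
      exact ((hasDerivAt_logPhi t).neg).continuousAt))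
  · intro t _
    exact ((hasDerivAt_logPhi t).neg).hasDerivWithinAt
  · intro t _
    exact (((hasDerivAt_phi t).div (hasDerivAt_Phi t) (Phi_pos t).ne').neg).hasDerivWithinAt
  · intro t _
    show (0:ℝ) ≤ -((-t * phi t * Phi t - phi t * phi t) / (Phi t) ^ 2)
    have h1 : -((-t * phi t * Phi t - phi t * phi t) / (Phi t) ^ 2)
        = phi t * (t * Phi t + phi t) / (Phi t) ^ 2 := by ring
    rw [h1]
    exact div_nonneg (mul_nonneg (phi_pos t).le (mills t)) (sq_nonneg _)

lemma convexOn_congr {E : Type*} [AddCommGroup E] [Module ℝ E] {s : Set E} {f g : E → ℝ}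
    (h : Set.EqOn f g s) (hg : ConvexOn ℝ s g) : ConvexOn ℝ s f := by
  refine ⟨hg.1, fun x hx y hy a b ha hb hab => ?_⟩
  rw [h hx, h hy, h (hg.1 hx hy ha hb hab)]
  exact hg.2 hx hy ha hb hab

lemma ConvexOn.finsetSum {E : Type*} [AddCommGroup E] [Module ℝ E] {s : Set E} {ι : Type*}
    (t : Finset ι) {f : ι → E → ℝ} (hs : Convex ℝ s) (h : ∀ i ∈ t, ConvexOn ℝ s (f i)) :
    ConvexOn ℝ s (fun q => ∑ i ∈ t, f i q) := by
  classical
  induction t using Finset.induction with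
  | empty => simpa using convexOn_const 0 hs
  | @insert j t hj ih =>
      simp only [Finset.sum_insert hj]
      exact (h j (Finset.mem_insert_self j t)).add
        (ih fun i hi => h i (Finset.mem_insert_of_mem hi))

section Main

variable {n p : ℕ}

/-- The linear map `q ↦ x i ⬝ᵥ q.1 - q.2 * y i`. -/
noncomputable def Lmap (y : ℝ) (x : Fin p → ℝ) : ((Fin p → ℝ) × ℝ) →ₗ[ℝ] ℝ where
  toFun := fun q => x ⬝ᵥ q.1 - q.2 * y
  map_add' := fun a b => by
    simp [dotProduct_add]; ring
  map_smul' := fun c a => by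
    simp [dotProduct_smul, smul_eq_mul]; ring

end Main

/-- The negative log-likelihood of the Normal AFT model, in the `(α, τ)`
parameterization, is convex on `ℝ^p × (0, ∞)` whenever there is at least one
uncensored observation. -/
theorem normalAFT_negLogLik_convexOn
    (n p : ℕ) (y : Fin n → ℝ) (x : Fin n → (Fin p → ℝ)) (d : Fin n → Bool)
    (n₀ : ℕ) (hn₀ : n₀ = (Finset.univ.filter (fun i => d i = true)).card)
    (hpos : 1 ≤ n₀) :
    ConvexOn ℝ {q : (Fin p → ℝ) × ℝ | 0 < q.2}
      (fun q : (Fin p → ℝ) × ℝ =>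
        ((n₀ : ℝ) / 2) * Real.log (2 * Real.pi / q.2 ^ 2)
          + (1 / 2) * ∑ i ∈ Finset.univ.filter (fun i => d i = true),
              (q.2 * y i - x i ⬝ᵥ q.1) ^ 2
          - ∑ i ∈ Finset.univ.filter (fun i => d i = false),
              Real.log (Phi (x i ⬝ᵥ q.1 - q.2 * y i))) := by
  set S : Set ((Fin p → ℝ) × ℝ) := {q | 0 < q.2} with hS
  have hSconv : Convex ℝ S := by
    have : S = (LinearMap.snd ℝ (Fin p → ℝ) ℝ) ⁻¹' (Set.Ioi 0) := rfl
    rw [this]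
    exact (convex_Ioi (0:ℝ)).linear_preimage _
  -- the convex model function
  set G : ((Fin p → ℝ) × ℝ) → ℝ := fun q =>
    (((n₀ : ℝ) / 2) * Real.log (2 * Real.pi) + (n₀ : ℝ) * (-Real.log q.2))
      + (1 / 2) * (∑ i ∈ Finset.univ.filter (fun i => d i = true),
          ((Lmap (y i) (x i)) q) ^ 2)
      + ∑ i ∈ Finset.univ.filter (fun i => d i = false),
          (-Real.log (Phi ((Lmap (y i) (x i)) q))) with hG
  have hEq : Set.EqOn (fun q : (Fin p → ℝ) × ℝ =>
        ((n₀ : ℝ) / 2) * Real.log (2 * Real.pi / q.2 ^ 2)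
          + (1 / 2) * ∑ i ∈ Finset.univ.filter (fun i => d i = true),
              (q.2 * y i - x i ⬝ᵥ q.1) ^ 2
          - ∑ i ∈ Finset.univ.filter (fun i => d i = false),
              Real.log (Phi (x i ⬝ᵥ q.1 - q.2 * y i))) G S := by
    intro q hq
    have hq2 : (0:ℝ) < q.2 := hq
    simp only [hG, Lmap, LinearMap.coe_mk, AddHom.coe_mk]
    rw [Real.log_div (by positivity) (by positivity), Real.log_pow]
    have h1 : ∀ i, (q.2 * y i - x i ⬝ᵥ q.1) ^ 2 = (x i ⬝ᵥ q.1 - q.2 * y i) ^ 2 :=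
      fun i => by ring
    simp only [h1]
    rw [Finset.sum_neg_distrib]
    push_cast
    ring
  refine convexOn_congr hEq ?_
  have hT1 : ConvexOn ℝ S (fun q : (Fin p → ℝ) × ℝ =>
      ((n₀ : ℝ) / 2) * Real.log (2 * Real.pi) + (n₀ : ℝ) * (-Real.log q.2)) := by
    refine (convexOn_const _ hSconv).add ?_
    have hneg : ConvexOn ℝ (Set.Ioi (0:ℝ)) (fun t : ℝ => -Real.log t) :=
      strictConcaveOn_log_Ioi.concaveOn.neg
    have := hneg.comp_linearMap (LinearMap.snd ℝ (Fin p → ℝ) ℝ)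
    exact this.smul (by positivity : (0:ℝ) ≤ (n₀ : ℝ))
  have hT2 : ConvexOn ℝ S (fun q : (Fin p → ℝ) × ℝ =>
      (1 / 2) * (∑ i ∈ Finset.univ.filter (fun i => d i = true),
        ((Lmap (y i) (x i)) q) ^ 2)) := by
    refine ConvexOn.smul (by norm_num) ?_
    refine ConvexOn.finsetSum _ hSconv fun i _ => ?_
    have hsq : ConvexOn ℝ (Set.univ : Set ℝ) (fun t : ℝ => t ^ 2) :=
      (even_two).convexOn_pow
    have := hsq.comp_linearMap (Lmap (y i) (x i))
    rw [Set.preimage_univ] at this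
    exact this.subset (Set.subset_univ S) hSconv
  have hT3 : ConvexOn ℝ S (fun q : (Fin p → ℝ) × ℝ =>
      ∑ i ∈ Finset.univ.filter (fun i => d i = false),
        (-Real.log (Phi ((Lmap (y i) (x i)) q)))) := by
    refine ConvexOn.finsetSum _ hSconv fun i _ => ?_
    have := convexOn_neg_log_Phi.comp_linearMap (Lmap (y i) (x i))
    rw [Set.preimage_univ] at this
    exact this.subset (Set.subset_univ S) hSconv
  exact (hT1.add hT2).add hT3
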